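/- Let ξ(z) = (𝔇(z), 𝔇̃(z)) be an n×(n+m) polynomial matrix with det 𝔇(z) of degree k. Then there exist an integer l with 0 ≤ l ≤ k, an n×n polynomial matrix 𝔇^{lc}(z) with det 𝔇^{lc} of degree l, and an n×(n+m) polynomial matrix ξ^{sm}(z) of rank n at every point z ∈ ℂ, such that ξ(z) = 𝔇^{lc}(z)·ξ^{sm}(z). Moreover, this decomposition is unique up to ξ^{sm} ↦ V(z)·ξ^{sm}, 𝔇^{lc} ↦ 𝔇^{lc}·V(z)⁻¹ with V(z) ∈ GL(n,ℂ[z]). -/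

import Mathlib

open Matrix Polynomial

lemma rank_eq_card_rows_iff {n : ℕ} {ι : Type*} [Fintype ι] (A : Matrix (Fin n) ι ℂ) :
    A.rank = n ↔ LinearIndependent ℂ (fun i => A i) := by
  classical
  rw [Matrix.rank_eq_finrank_span_row, linearIndependent_iff_card_eq_finrank_span]
  rw [Set.finrank, Fintype.card_fin]
  exact eq_comm

lemma exists_minor_ne_zero {n : ℕ} {ι : Type*} [Fintype ι] [DecidableEq ι]
    (A : Matrix (Fin n) ι ℂ) (h : A.rank = n) :
    ∃ g : Fin n → ι, (A.submatrix id g).det ≠ 0 := by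
  classical
  have hspan : Submodule.span ℂ (Set.range Aᵀ) = ⊤ := by
    apply Submodule.eq_top_of_finrank_eq
    change Module.finrank ℂ (Submodule.span ℂ (Set.range A.col)) = _
    rw [← Matrix.rank_eq_finrank_span_cols, h, Module.finrank_pi, Fintype.card_fin]
  obtain ⟨t, hts, htspan, htli⟩ := exists_linearIndependent ℂ (Set.range Aᵀ)
  rw [hspan] at htspan
  have htfin : t.Finite := htli.setFinite
  have := htfin.fintype
  let b : Module.Basis t ℂ (Fin n → ℂ) := Module.Basis.mk htli (by rw [Subtype.range_coe]; exact htspan.ge)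
  have hcard : Fintype.card t = n := by
    have h2 := Module.finrank_eq_card_basis b
    rw [Module.finrank_pi, Fintype.card_fin] at h2
    omega
  let e : Fin n ≃ t := (Fintype.equivFinOfCardEq hcard).symm
  have hmem : ∀ i : Fin n, ((e i : Fin n → ℂ)) ∈ Set.range Aᵀ := fun i => hts (e i).2
  choose g hg using hmem
  refine ⟨g, ?_⟩
  have hli : LinearIndependent ℂ (fun i => (A.submatrix id g)ᵀ i) := by
    have heq : (fun i : Fin n => (A.submatrix id g)ᵀ i) = fun i => ((e i : Fin n → ℂ)) := by
      funext i
      ext r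
      exact congrFun (hg i) r
    rw [heq]
    have hb : LinearIndependent ℂ (Subtype.val : t → (Fin n → ℂ)) := htli
    exact hb.comp e e.injective
  have hu := Matrix.linearIndependent_cols_iff_isUnit.mp hli
  rw [Matrix.isUnit_iff_isUnit_det] at hu
  exact hu.ne_zero

lemma exists_right_inverse {n : ℕ} {ι : Type*} [Fintype ι] [DecidableEq ι]
    (A : Matrix (Fin n) ι (Polynomial ℂ))
    (h : ∀ z : ℂ, ((A.map (eval z)).rank = n)) :
    ∃ B : Matrix ι (Fin n) (Polynomial ℂ), A * B = 1 := by
  classical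
  have hone : (1 : Polynomial ℂ) ∈
      Ideal.span (Set.range (fun g : Fin n → ι => (A.submatrix id g).det)) := by
    by_contra hmem
    have hne : Ideal.span (Set.range (fun g : Fin n → ι => (A.submatrix id g).det)) ≠ ⊤ :=
      fun ht => hmem (ht ▸ Submodule.mem_top)
    obtain ⟨d, hd⟩ : ∃ d : Polynomial ℂ,
        Ideal.span (Set.range (fun g : Fin n → ι => (A.submatrix id g).det))
          = Ideal.span {d} :=
      (Ideal.span _).isPrincipal_iff.mp inferInstance
    have hdnu : ¬ IsUnit d := by
      intro hu
      exact hne (by rw [hd, Ideal.span_singleton_eq_top]; exact hu)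
    obtain ⟨z₀, hz₀⟩ : ∃ z₀ : ℂ, eval z₀ d = 0 := by
      rcases eq_or_ne d 0 with rfl | hd0
      · exact ⟨0, by simp⟩
      · have hdeg : 0 < d.degree := by
          rcases lt_or_ge 0 d.degree with h' | h'
          · exact h'
          · exact absurd (Polynomial.isUnit_iff_degree_eq_zero.mpr
              (le_antisymm h' (Polynomial.zero_le_degree_iff.mpr hd0))) hdnu
        obtain ⟨z, hz⟩ := Complex.exists_root hdeg
        exact ⟨z, hz⟩
    obtain ⟨g, hg⟩ := exists_minor_ne_zero (A.map (eval z₀)) (h z₀)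
    apply hg
    have hmemv : (A.submatrix id g).det ∈ Ideal.span {d} := by
      rw [← hd]; exact Ideal.subset_span ⟨g, rfl⟩
    obtain ⟨c, hc⟩ := Ideal.mem_span_singleton'.mp hmemv
    have heq : (A.map (eval z₀)).submatrix id g = (A.submatrix id g).map (eval z₀) := by
      ext i j; rfl
    rw [heq, show ((A.submatrix id g).map (eval z₀)) = (Polynomial.evalRingHom z₀).mapMatrix (A.submatrix id g) from rfl, ← RingHom.map_det]
    show (Polynomial.evalRingHom z₀) (A.submatrix id g).det = 0
    rw [← hc]
    simp [hz₀]
  have hone' : (1 : Polynomial ℂ) ∈ Submodule.span (Polynomial ℂ)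
      (Set.range (fun g : Fin n → ι => (A.submatrix id g).det)) := hone
  rw [Submodule.mem_span_range_iff_exists_fun] at hone'
  obtain ⟨c, hc⟩ := hone'
  refine ⟨∑ g : Fin n → ι,
    c g • ((1 : Matrix ι ι (Polynomial ℂ)).submatrix id g * (A.submatrix id g).adjugate), ?_⟩
  rw [Matrix.mul_sum]
  have key : ∀ g : Fin n → ι,
      A * (c g • ((1 : Matrix ι ι (Polynomial ℂ)).submatrix id g * (A.submatrix id g).adjugate))
        = (c g * (A.submatrix id g).det) • (1 : Matrix (Fin n) (Fin n) (Polynomial ℂ)) := by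
    intro g
    rw [Matrix.mul_smul, ← Matrix.mul_assoc]
    have h1 : A * (1 : Matrix ι ι (Polynomial ℂ)).submatrix id g = A.submatrix id g := by
      have := Matrix.mul_submatrix_one (Equiv.refl ι) g A
      simpa using this
    rw [h1, Matrix.mul_adjugate, smul_smul]
  simp_rw [key]
  rw [← Finset.sum_smul]
  have hc' : ∑ g : Fin n → ι, c g * (A.submatrix id g).det = 1 := by
    simpa [smul_eq_mul] using hc
  rw [hc', one_smul]

lemma mul_left_cancel_det {p : ℕ} {ι : Type*} [Fintype ι] {R : Type*} [CommRing R] [IsDomain R]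
    {P : Matrix (Fin p) (Fin p) R} (hP : P.det ≠ 0) {A B : Matrix (Fin p) ι R}
    (h : P * A = P * B) : A = B := by
  classical
  have h2 : P.adjugate * (P * A) = P.adjugate * (P * B) := by rw [h]
  rw [← Matrix.mul_assoc, ← Matrix.mul_assoc, Matrix.adjugate_mul, Matrix.smul_mul,
    Matrix.one_mul, Matrix.smul_mul, Matrix.one_mul] at h2
  ext i j
  have := congrFun (congrFun h2 i) j
  simp only [Matrix.smul_apply, smul_eq_mul] at this
  exact mul_left_cancel₀ hP this

lemma map_fromColumns {R S : Type*} {p q r : Type*} (f : R → S)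
    (A : Matrix p q R) (B : Matrix p r R) :
    (Matrix.fromCols A B).map f = Matrix.fromCols (A.map f) (B.map f) := by
  ext i j
  cases j <;> rfl

lemma det_ne_zero_of_degree_nat {p : Polynomial ℂ} {l : ℕ} (h : p.degree = (l : WithBot ℕ)) :
    p ≠ 0 := by
  intro h0
  rw [h0, Polynomial.degree_zero] at h
  exact absurd h.symm (by simp)

lemma exist_fact (n m k : ℕ)
    (D : Matrix (Fin n) (Fin n) (Polynomial ℂ))
    (Dt : Matrix (Fin n) (Fin m) (Polynomial ℂ))
    (hD : D.det.degree = (k : WithBot ℕ)) :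
    ∃ l : ℕ, l ≤ k ∧
      ∃ (Dlc Dsm : Matrix (Fin n) (Fin n) (Polynomial ℂ))
        (Dtsm : Matrix (Fin n) (Fin m) (Polynomial ℂ)),
        Dlc.det.degree = (l : WithBot ℕ) ∧
        D = Dlc * Dsm ∧ Dt = Dlc * Dtsm ∧
        ∀ z : ℂ, (Matrix.fromCols (Dsm.map (Polynomial.eval z))
          (Dtsm.map (Polynomial.eval z))).rank = n := by
  classical
  have hDdet : D.det ≠ 0 := det_ne_zero_of_degree_nat hD
  set ξ : Matrix (Fin n) (Fin n ⊕ Fin m) (Polynomial ℂ) := Matrix.fromCols D Dt with hξ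
  -- rows of ξ are linearly independent
  have hli : LinearIndependent (Polynomial ℂ) (fun i => ξ i) := by
    rw [Fintype.linearIndependent_iff]
    intro g hg i
    have hcol : ∀ j : Fin n, ∑ i, g i * D i j = 0 := by
      intro j
      have := congrFun hg (Sum.inl j)
      simpa [hξ, Finset.sum_apply, Matrix.fromCols] using this
    have key : 0 = D.det * g i := by
      calc (0 : Polynomial ℂ) = ∑ j, (∑ i', g i' * D i' j) * D.adjugate j i := by
            simp [hcol]
        _ = ∑ j, ∑ i', g i' * D i' j * D.adjugate j i := by
            simp [Finset.sum_mul]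
        _ = ∑ i', ∑ j, g i' * D i' j * D.adjugate j i := Finset.sum_comm
        _ = ∑ i', g i' * ∑ j, D i' j * D.adjugate j i := by
            simp [Finset.mul_sum, mul_assoc]
        _ = ∑ i', g i' * ((D * D.adjugate) i' i) := by
            simp [Matrix.mul_apply]
        _ = ∑ i', g i' * ((D.det • (1 : Matrix (Fin n) (Fin n) (Polynomial ℂ))) i' i) := by
            rw [Matrix.mul_adjugate]
        _ = D.det * g i := by
            simp [Matrix.smul_apply, Matrix.one_apply, mul_comm]
    have := key.symm
    rw [mul_eq_zero] at this
    exact this.resolve_left hDdet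
  set N : Submodule (Polynomial ℂ) ((Fin n ⊕ Fin m) → Polynomial ℂ) :=
    Submodule.span (Polynomial ℂ) (Set.range fun i => ξ i) with hN
  have memN : ∀ i, ξ i ∈ N := fun i => Submodule.subset_span (Set.mem_range_self i)
  obtain ⟨r, snf⟩ := N.smithNormalForm (Pi.basisFun (Polynomial ℂ) (Fin n ⊕ Fin m))
  -- r = n
  have hrank : Module.rank (Polynomial ℂ) N = r := rank_eq_card_basis snf.bN |>.trans (by simp)
  have hrn : r = n := by
    have hub : Module.rank (Polynomial ℂ) N ≤ n := by
      refine le_trans (rank_span_le _) ?_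
      refine le_trans Cardinal.mk_range_le ?_
      simp
    have hlb : (n : Cardinal) ≤ Module.rank (Polynomial ℂ) N := by
      have liN : LinearIndependent (Polynomial ℂ) (fun i => (⟨ξ i, memN i⟩ : N)) := by
        apply LinearIndependent.of_comp N.subtype
        exact hli
      have := liN.cardinal_le_rank
      simpa using this
    rw [hrank] at hub hlb
    exact_mod_cast le_antisymm hub hlb
  have hrn2 : n = r := hrn.symm
  subst hrn2
  -- construct the matrices
  set ξsm : Matrix (Fin n) (Fin n ⊕ Fin m) (Polynomial ℂ) :=
    Matrix.of (fun i j => (snf.bM (snf.f i)) j) with hξsm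
  set Dsm : Matrix (Fin n) (Fin n) (Polynomial ℂ) :=
    Matrix.of (fun i j => ξsm i (Sum.inl j)) with hDsm
  set Dtsm : Matrix (Fin n) (Fin m) (Polynomial ℂ) :=
    Matrix.of (fun i j => ξsm i (Sum.inr j)) with hDtsm
  have hfc : Matrix.fromCols Dsm Dtsm = ξsm := by
    ext i j; cases j <;> rfl
  set Dlc : Matrix (Fin n) (Fin n) (Polynomial ℂ) :=
    Matrix.of (fun i i' => (snf.bN.repr ⟨ξ i, memN i⟩) i' * snf.a i') with hDlc
  have hfact : ξ = Dlc * ξsm := by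
    refine Matrix.ext fun i j => ?_
    have hsum := congrArg Subtype.val (snf.bN.sum_repr ⟨ξ i, memN i⟩)
    have hsum2 : ∑ i', (snf.bN.repr ⟨ξ i, memN i⟩) i' • ((snf.bN i' : (Fin n ⊕ Fin m) → Polynomial ℂ)) = ξ i := by
      simpa only [AddSubmonoidClass.coe_finset_sum, Submodule.coe_smul] using hsum
    have hsum3 := congrFun hsum2 j
    rw [Matrix.mul_apply]
    have hsum4 : ∑ i', ((snf.bN.repr ⟨ξ i, memN i⟩) i' • ((snf.bN i' : (Fin n ⊕ Fin m) → Polynomial ℂ))) j = ξ i j := by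
      rw [← hsum3, Finset.sum_apply]
    rw [← hsum4]
    simp only [Pi.smul_apply, smul_eq_mul]
    refine Finset.sum_congr rfl fun i' _ => ?_
    rw [snf.snf i']
    simp [hDlc, hξsm, mul_assoc]
  have hpair : Matrix.fromCols D Dt = Matrix.fromCols (Dlc * Dsm) (Dlc * Dtsm) := by
    rw [← Matrix.mul_fromCols, hfc, ← hfact, hξ]
  obtain ⟨hDeq, hDteq⟩ := Matrix.fromCols_inj hpair
  have hdetmul : D.det = Dlc.det * Dsm.det := by rw [hDeq, Matrix.det_mul]
  have hDlcne : Dlc.det ≠ 0 := fun h0 => hDdet (by rw [hdetmul, h0, zero_mul])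
  have hDsmne : Dsm.det ≠ 0 := fun h0 => hDdet (by rw [hdetmul, h0, mul_zero])
  refine ⟨Dlc.det.natDegree, ?_, Dlc, Dsm, Dtsm, Polynomial.degree_eq_natDegree hDlcne,
    hDeq, hDteq, ?_⟩
  · -- degree bound
    have hdeg : D.det.degree = Dlc.det.degree + Dsm.det.degree := by
      rw [hdetmul, Polynomial.degree_mul]
    rw [hD, Polynomial.degree_eq_natDegree hDlcne, Polynomial.degree_eq_natDegree hDsmne] at hdeg
    have : (k : WithBot ℕ) = ((Dlc.det.natDegree + Dsm.det.natDegree : ℕ) : WithBot ℕ) := by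
      rw [hdeg]; push_cast; rfl
    have hk : k = Dlc.det.natDegree + Dsm.det.natDegree := by exact_mod_cast this
    omega
  · -- full rank at every point
    intro z
    rw [← map_fromColumns, hfc]
    set B : Matrix (Fin n ⊕ Fin m) (Fin n ⊕ Fin m) (Polynomial ℂ) :=
      Matrix.of (fun p q => (snf.bM p) q) with hB
    have hBdet : IsUnit B.det := by
      have hinv := Module.Basis.invertibleToMatrix (Pi.basisFun (Polynomial ℂ) (Fin n ⊕ Fin m)) snf.bM
      have hu : IsUnit ((Pi.basisFun (Polynomial ℂ) (Fin n ⊕ Fin m)).toMatrix snf.bM) :=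
        isUnit_of_invertible _
      rw [Matrix.isUnit_iff_isUnit_det] at hu
      have hBT : (Pi.basisFun (Polynomial ℂ) (Fin n ⊕ Fin m)).toMatrix snf.bM = Bᵀ := by
        ext p q
        simp [Module.Basis.toMatrix_apply, hB]
      rwa [hBT, Matrix.det_transpose] at hu
    obtain ⟨u, hu, hCu⟩ := Polynomial.isUnit_iff.mp hBdet
    have hBz : (B.map (eval z)).det ≠ 0 := by
      have : (B.map (eval z)).det = eval z B.det := by
        rw [show B.map (eval z) = (Polynomial.evalRingHom z).mapMatrix B from rfl, ← RingHom.map_det]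
        rfl
      rw [this, ← hCu]
      simpa using hu.ne_zero
    have hBrows : LinearIndependent ℂ (fun p => (B.map (eval z)) p) :=
      Matrix.linearIndependent_rows_iff_isUnit.mpr
        ((Matrix.isUnit_iff_isUnit_det _).mpr (isUnit_iff_ne_zero.mpr hBz))
    have hsub : ξsm.map (eval z) = (B.map (eval z)).submatrix snf.f id := by
      ext i j; rfl
    rw [hsub]
    have hli2 : LinearIndependent ℂ (fun i => ((B.map (eval z)).submatrix snf.f id) i) := by
      have : (fun i => ((B.map (eval z)).submatrix snf.f id) i)
          = (fun p => (B.map (eval z)) p) ∘ snf.f := by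
        funext i; rfl
      rw [this]
      exact hBrows.comp _ snf.f.injective
    have := hli2.rank_matrix (M := (B.map (eval z)).submatrix snf.f id)
    simpa using this

lemma uniq (n m : ℕ)
    (D : Matrix (Fin n) (Fin n) (Polynomial ℂ))
    (Dt : Matrix (Fin n) (Fin m) (Polynomial ℂ))
    (l₁ l₂ : ℕ) (Dlc₁ Dsm₁ Dlc₂ Dsm₂ : Matrix (Fin n) (Fin n) (Polynomial ℂ))
    (Dtsm₁ Dtsm₂ : Matrix (Fin n) (Fin m) (Polynomial ℂ))
    (hdeg₁ : Dlc₁.det.degree = (l₁ : WithBot ℕ))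
    (hD₁ : D = Dlc₁ * Dsm₁) (hDt₁ : Dt = Dlc₁ * Dtsm₁)
    (hr₁ : ∀ z : ℂ, (Matrix.fromCols (Dsm₁.map (Polynomial.eval z))
        (Dtsm₁.map (Polynomial.eval z))).rank = n)
    (hdeg₂ : Dlc₂.det.degree = (l₂ : WithBot ℕ))
    (hD₂ : D = Dlc₂ * Dsm₂) (hDt₂ : Dt = Dlc₂ * Dtsm₂)
    (hr₂ : ∀ z : ℂ, (Matrix.fromCols (Dsm₂.map (Polynomial.eval z))
        (Dtsm₂.map (Polynomial.eval z))).rank = n) :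
    ∃ V : Matrix (Fin n) (Fin n) (Polynomial ℂ),
      IsUnit V.det ∧ Dsm₂ = V * Dsm₁ ∧ Dtsm₂ = V * Dtsm₁ ∧ Dlc₂ = Dlc₁ * V⁻¹ := by
  classical
  set ξ₁ := Matrix.fromCols Dsm₁ Dtsm₁ with hξ₁
  set ξ₂ := Matrix.fromCols Dsm₂ Dtsm₂ with hξ₂
  have hdet₁ : Dlc₁.det ≠ 0 := det_ne_zero_of_degree_nat hdeg₁
  have hdet₂ : Dlc₂.det ≠ 0 := det_ne_zero_of_degree_nat hdeg₂
  obtain ⟨R₁, hR₁⟩ := exists_right_inverse ξ₁ (fun z => by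
    rw [hξ₁, map_fromColumns]; exact hr₁ z)
  obtain ⟨R₂, hR₂⟩ := exists_right_inverse ξ₂ (fun z => by
    rw [hξ₂, map_fromColumns]; exact hr₂ z)
  have hX : Dlc₁ * ξ₁ = Dlc₂ * ξ₂ := by
    rw [hξ₁, hξ₂, Matrix.mul_fromCols, Matrix.mul_fromCols, ← hD₁, ← hDt₁, ← hD₂, ← hDt₂]
  set V := ξ₂ * R₁ with hV
  set W := ξ₁ * R₂ with hW
  have hVξ : V * ξ₁ = ξ₂ := by
    apply mul_left_cancel_det hdet₂
    have h1 : ξ₁ * (R₁ * ξ₁) = ξ₁ := by rw [← Matrix.mul_assoc, hR₁, Matrix.one_mul]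
    calc Dlc₂ * (V * ξ₁) = Dlc₂ * ξ₂ * (R₁ * ξ₁) := by simp only [hV, Matrix.mul_assoc]
      _ = Dlc₁ * ξ₁ * (R₁ * ξ₁) := by rw [hX]
      _ = Dlc₁ * (ξ₁ * (R₁ * ξ₁)) := by rw [Matrix.mul_assoc]
      _ = Dlc₁ * ξ₁ := by rw [h1]
      _ = Dlc₂ * ξ₂ := hX
  have hWξ : W * ξ₂ = ξ₁ := by
    apply mul_left_cancel_det hdet₁
    have h1 : ξ₂ * (R₂ * ξ₂) = ξ₂ := by rw [← Matrix.mul_assoc, hR₂, Matrix.one_mul]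
    calc Dlc₁ * (W * ξ₂) = Dlc₁ * ξ₁ * (R₂ * ξ₂) := by simp only [hW, Matrix.mul_assoc]
      _ = Dlc₂ * ξ₂ * (R₂ * ξ₂) := by rw [hX]
      _ = Dlc₂ * (ξ₂ * (R₂ * ξ₂)) := by rw [Matrix.mul_assoc]
      _ = Dlc₂ * ξ₂ := by rw [h1]
      _ = Dlc₁ * ξ₁ := hX.symm
  have hVW : V * W = 1 := by
    calc V * W = (V * ξ₁) * R₂ := by simp only [hV, hW, Matrix.mul_assoc]
      _ = ξ₂ * R₂ := by rw [hVξ]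
      _ = 1 := hR₂
  have hVdet : IsUnit V.det := IsUnit.of_mul_eq_one W.det
    (by rw [← Matrix.det_mul, hVW, Matrix.det_one])
  have hpair : Matrix.fromCols (V * Dsm₁) (V * Dtsm₁) = Matrix.fromCols Dsm₂ Dtsm₂ := by
    rw [← Matrix.mul_fromCols, ← hξ₁, hVξ, hξ₂]
  obtain ⟨hsm, htsm⟩ := Matrix.fromCols_inj hpair
  have hDlcV : Dlc₂ * V = Dlc₁ := by
    calc Dlc₂ * V = Dlc₂ * ξ₂ * R₁ := by rw [hV, Matrix.mul_assoc]
      _ = Dlc₁ * ξ₁ * R₁ := by rw [hX]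
      _ = Dlc₁ * (ξ₁ * R₁) := by rw [Matrix.mul_assoc]
      _ = Dlc₁ := by rw [hR₁, Matrix.mul_one]
  refine ⟨V, hVdet, hsm.symm, htsm.symm, ?_⟩
  rw [← hDlcV, Matrix.mul_assoc, Matrix.mul_nonsing_inv V hVdet, Matrix.mul_one]

/-- Local–semilocal factorization of vortex moduli matrices: any `ξ(z) = (𝔇, 𝔇̃)` with
`det 𝔇` of degree `k` factors as `ξ = 𝔇^{lc} · ξ^{sm}` with `det 𝔇^{lc}` of degree
`l ≤ k` and `ξ^{sm}(z)` of rank `n` at every point; the factorization is unique up to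
left multiplication of `ξ^{sm}` by an element `V ∈ GL(n, ℂ[z])` (and `𝔇^{lc} ↦ 𝔇^{lc} V⁻¹`). -/
theorem local_semilocal_factorization (n m k : ℕ)
    (D : Matrix (Fin n) (Fin n) (Polynomial ℂ))
    (Dt : Matrix (Fin n) (Fin m) (Polynomial ℂ))
    (hD : D.det.degree = (k : WithBot ℕ)) :
    (∃ l : ℕ, l ≤ k ∧
      ∃ (Dlc Dsm : Matrix (Fin n) (Fin n) (Polynomial ℂ))
        (Dtsm : Matrix (Fin n) (Fin m) (Polynomial ℂ)),
        Dlc.det.degree = (l : WithBot ℕ) ∧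
        D = Dlc * Dsm ∧ Dt = Dlc * Dtsm ∧
        ∀ z : ℂ, (Matrix.fromCols (Dsm.map (Polynomial.eval z))
          (Dtsm.map (Polynomial.eval z))).rank = n) ∧
    (∀ (l₁ l₂ : ℕ) (Dlc₁ Dsm₁ Dlc₂ Dsm₂ : Matrix (Fin n) (Fin n) (Polynomial ℂ))
       (Dtsm₁ Dtsm₂ : Matrix (Fin n) (Fin m) (Polynomial ℂ)),
      Dlc₁.det.degree = (l₁ : WithBot ℕ) →
      D = Dlc₁ * Dsm₁ → Dt = Dlc₁ * Dtsm₁ →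
      (∀ z : ℂ, (Matrix.fromCols (Dsm₁.map (Polynomial.eval z))
        (Dtsm₁.map (Polynomial.eval z))).rank = n) →
      Dlc₂.det.degree = (l₂ : WithBot ℕ) →
      D = Dlc₂ * Dsm₂ → Dt = Dlc₂ * Dtsm₂ →
      (∀ z : ℂ, (Matrix.fromCols (Dsm₂.map (Polynomial.eval z))
        (Dtsm₂.map (Polynomial.eval z))).rank = n) →
      ∃ V : Matrix (Fin n) (Fin n) (Polynomial ℂ),
        IsUnit V.det ∧ Dsm₂ = V * Dsm₁ ∧ Dtsm₂ = V * Dtsm₁ ∧ Dlc₂ = Dlc₁ * V⁻¹) := by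
  constructor
  · exact exist_fact n m k D Dt hD
  · intro l₁ l₂ Dlc₁ Dsm₁ Dlc₂ Dsm₂ Dtsm₁ Dtsm₂ h1 h2 h3 h4 h5 h6 h7 h8
    exact uniq n m D Dt l₁ l₂ Dlc₁ Dsm₁ Dlc₂ Dsm₂ Dtsm₁ Dtsm₂ h1 h2 h3 h4 h5 h6 h7 h8
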